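/- Let (X, {d_r}) satisfy the weaker d_r-axioms. Then there exists a quasi-pseudo-metric ρ : X × X → [0,∞), i.e. ρ(x,x) = 0 for all x and ρ(x,z) ≤ ρ(x,y) + ρ(y,z) for all x, y, z, which induces the same entourage filter as the family {d_r}: (i) for all r > 0 and ε > 0 there exists ε' > 0 such that ρ(x,y) < ε' implies d_r(x,y) < ε; and (ii) for every ε > 0 there exist r > 0 and ε' > 0 such that d_r(x,y) < ε' implies ρ(x,y) < ε. -/

import Mathlib

open ENNReal

/-- The weaker `d_r`-axioms for a family of metric-like functions
`d : ℝ → X → X → ℝ≥0∞` indexed by `r > 0`. -/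
structure WeakerDr {X : Type*} (d : ℝ → X → X → ℝ≥0∞) : Prop where
  self : ∀ (x : X) (r : ℝ), 0 < r → d r x x = 0
  mono : ∀ (x y : X) (r₁ r₂ : ℝ), 0 < r₁ → r₁ ≤ r₂ → d r₁ x y ≤ d r₂ x y
  usc : ∀ (x y : X) (r ε : ℝ), 0 < r → 0 < ε → d r x y < ENNReal.ofReal ε →
    ∃ δ : ℝ, 0 < δ ∧ d (r + δ) x y < ENNReal.ofReal ε
  weaker_tri : ∀ (x y z : X) (r₁ r₂ r₃ : ℝ), 0 < r₁ → 0 < r₂ → 0 < r₃ →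
    d (r₁ + r₂ + r₃) x y < ENNReal.ofReal r₃ → d (r₁ + r₂ + r₃) y z < ENNReal.ofReal r₂ →
    d r₁ x z ≤ d (r₁ + r₂ + r₃) x y + d (r₁ + r₂ + r₃) y z

/-- The basic entourage `U_{r,ε} = {(x,y) | d_r(x,y) < ε}`. -/
def entourageDr {X : Type*} (d : ℝ → X → X → ℝ≥0∞) (r ε : ℝ) : Set (X × X) :=
  {p | d r p.1 p.2 < ENNReal.ofReal ε}

open NNReal

namespace Stmt13Aux

noncomputable section

variable {X : Type*} (d : ℝ → X → X → ℝ≥0∞)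

/-- The scale of the `n`-th basic entourage. -/
def eps (n : ℕ) : ℝ := (1/3 : ℝ) ^ n / 5

lemma eps_pos (n : ℕ) : 0 < eps n := by unfold eps; positivity

lemma eps_anti {m n : ℕ} (hmn : m ≤ n) : eps n ≤ eps m := by
  unfold eps
  have := pow_le_pow_of_le_one (by norm_num : (0:ℝ) ≤ 1/3) (by norm_num : (1/3:ℝ) ≤ 1) hmn
  linarith

lemma eps_succ (n : ℕ) : 3 * eps (n+1) = eps n := by unfold eps; ring

/-- The `n`-th basic entourage. -/
def V (n : ℕ) : Set (X × X) := entourageDr d ((n : ℝ) + 1) (eps n)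

lemma mem_V {n : ℕ} {x y : X} :
    (x, y) ∈ V d n ↔ d ((n : ℝ) + 1) x y < ENNReal.ofReal (eps n) := Iff.rfl

variable {d}

lemma mem_V_refl (h : WeakerDr d) (n : ℕ) (x : X) : (x, x) ∈ V d n := by
  rw [mem_V, h.self x _ (by positivity)]
  exact ENNReal.ofReal_pos.mpr (eps_pos n)

lemma V_anti (h : WeakerDr d) {m n : ℕ} (hmn : m ≤ n) : V d n ⊆ V d m := by
  rintro ⟨x, y⟩ hxy
  rw [mem_V] at hxy ⊢
  calc d ((m : ℝ) + 1) x y ≤ d ((n : ℝ) + 1) x y :=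
        h.mono x y _ _ (by positivity) (by exact_mod_cast by gcongr <;> exact_mod_cast hmn)
    _ < ENNReal.ofReal (eps n) := hxy
    _ ≤ ENNReal.ofReal (eps m) := ENNReal.ofReal_le_ofReal (eps_anti hmn)

lemma comp3 (h : WeakerDr d) {n : ℕ} {x y z w : X}
    (hxy : (x, y) ∈ V d (n+1)) (hyz : (y, z) ∈ V d (n+1)) (hzw : (z, w) ∈ V d (n+1)) :
    (x, w) ∈ V d n := by
  set e : ℝ := eps (n+1) with he
  have he_pos : 0 < e := eps_pos _
  have he15 : e ≤ 1/15 := by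
    have h1 : eps (n+1) ≤ eps 1 := eps_anti (by omega)
    have : eps 1 = 1/15 := by norm_num [eps]
    rw [he]; linarith
  rw [mem_V] at hxy hyz hzw
  push_cast at hxy hyz hzw
  -- Step A
  set s : ℝ := (n : ℝ) + 2 - 2 * e with hs
  have hn0 : (0:ℝ) ≤ (n:ℝ) := Nat.cast_nonneg n
  have hs_pos : 0 < s := by rw [hs]; nlinarith
  have hsum : s + e + e = (n : ℝ) + 1 + 1 := by ring
  have hA := h.weaker_tri x y z s e e hs_pos he_pos he_pos
    (by rw [hsum]; exact hxy) (by rw [hsum]; exact hyz)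
  rw [hsum] at hA
  have hAlt : d s x z < ENNReal.ofReal (2 * e) := by
    calc d s x z ≤ d ((n:ℝ) + 1 + 1) x y + d ((n:ℝ) + 1 + 1) y z := hA
      _ < ENNReal.ofReal e + ENNReal.ofReal e := ENNReal.add_lt_add hxy hyz
      _ = ENNReal.ofReal (2 * e) := by
          rw [← ENNReal.ofReal_add he_pos.le he_pos.le]; norm_num [two_mul]
  -- Step B
  have h2e_pos : 0 < 2 * e := by linarith
  set R : ℝ := ((n : ℝ) + 1) + e + 2 * e with hR
  have hRs : R ≤ s := by rw [hR, hs]; linarith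
  have hRn2 : R ≤ (n : ℝ) + 1 + 1 := by rw [hR]; linarith
  have hR_pos : 0 < R := by rw [hR]; linarith
  have hRxz : d R x z < ENNReal.ofReal (2 * e) :=
    lt_of_le_of_lt (h.mono x z R s hR_pos hRs) hAlt
  have hRzw : d R z w < ENNReal.ofReal e :=
    lt_of_le_of_lt (h.mono z w R _ hR_pos hRn2) hzw
  have hB := h.weaker_tri x z w ((n : ℝ) + 1) e (2 * e) (by positivity) he_pos h2e_pos
    hRxz hRzw
  rw [mem_V]
  calc d ((n:ℝ) + 1) x w ≤ d R x z + d R z w := hB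
    _ < ENNReal.ofReal (2 * e) + ENNReal.ofReal e := ENNReal.add_lt_add hRxz hRzw
    _ = ENNReal.ofReal (eps n) := by
        rw [← ENNReal.ofReal_add h2e_pos.le he_pos.le]
        congr 1
        have h3 := eps_succ n
        rw [he]; linarith

lemma comp2 (h : WeakerDr d) {n : ℕ} {x y z : X}
    (hxy : (x, y) ∈ V d (n+1)) (hyz : (y, z) ∈ V d (n+1)) : (x, z) ∈ V d n :=
  comp3 h hxy hyz (mem_V_refl h _ z)

variable (d)

open Classical in
/-- The basic "pre-distance". -/
def f (x y : X) : ℝ≥0∞ := ⨅ n : ℕ, if (x, y) ∈ V d n then (2⁻¹ : ℝ≥0∞) ^ n else 1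

variable {d}

lemma f_le_one (x y : X) : f d x y ≤ 1 := by
  refine (iInf_le _ 0).trans ?_
  split <;> simp

lemma f_ne_top (x y : X) : f d x y ≠ ⊤ :=
  ne_top_of_le_ne_top one_ne_top (f_le_one x y)

lemma f_le_of_mem {n : ℕ} {x y : X} (hm : (x, y) ∈ V d n) : f d x y ≤ 2⁻¹ ^ n := by
  refine (iInf_le _ n).trans ?_
  rw [if_pos hm]

lemma f_self (h : WeakerDr d) (x : X) : f d x x = 0 := by
  by_contra hne
  obtain ⟨n, hn⟩ := ENNReal.exists_inv_two_pow_lt hne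
  exact absurd (f_le_of_mem (mem_V_refl h n x)) (not_le.mpr hn)

lemma f_lt_imp (h : WeakerDr d) {n : ℕ} {x y : X} (hf : f d x y < 2⁻¹ ^ (n+1)) :
    (x, y) ∈ V d (n+1) := by
  rw [f, iInf_lt_iff] at hf
  obtain ⟨m, hm⟩ := hf
  by_cases hmem : (x, y) ∈ V d m
  · rw [if_pos hmem] at hm
    rcases le_or_gt m (n+1) with hle | hlt
    · exact absurd (pow_le_pow_of_le_one zero_le (by norm_num) hle) (not_le.mpr hm)
    · exact V_anti h hlt.le hmem
  · rw [if_neg hmem] at hm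
    exact absurd (lt_of_lt_of_le hm (pow_le_one₀ zero_le (by norm_num))) (lt_irrefl 1)

lemma mem_of_f_eq_zero (h : WeakerDr d) {x y : X} (h0 : f d x y = 0) (m : ℕ) :
    (x, y) ∈ V d m :=
  V_anti h (Nat.le_succ m) (f_lt_imp h (by rw [h0]; exact ENNReal.pow_pos (by norm_num) _))

variable (d)

/-- Sum along a chain. -/
def cs (u : ℕ → X) (k : ℕ) : ℝ≥0∞ := ∑ i ∈ Finset.range k, f d (u i) (u (i+1))

variable {d}

lemma cs_ne_top (u : ℕ → X) (k : ℕ) : cs d u k ≠ ⊤ := by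
  rw [cs]
  exact ENNReal.sum_ne_top.mpr fun i _ => f_ne_top _ _

lemma chain_mem_all (h : WeakerDr d) (u : ℕ → X) :
    ∀ k, (∀ i < k, ∀ m, (u i, u (i+1)) ∈ V d m) → ∀ n, (u 0, u k) ∈ V d n := by
  intro k
  induction k with
  | zero => exact fun _ n => mem_V_refl h n _
  | succ k ih =>
    intro hu n
    exact comp2 h (ih (fun i hi m => hu i (by omega) m) (n+1)) (hu k (by omega) (n+1))

/-- The key "Kelley chain" lemma. -/
lemma key (h : WeakerDr d) (k : ℕ) :
    ∀ (u : ℕ → X) (n : ℕ), cs d u k < (2⁻¹ : ℝ≥0∞) ^ (n+1) → (u 0, u k) ∈ V d n := by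
  induction k using Nat.strong_induction_on with
  | _ k IH =>
  intro u n hT
  rcases Nat.eq_zero_or_pos k with rfl | hk
  · exact mem_V_refl h n _
  have hT_ne_top : cs d u k ≠ ⊤ := cs_ne_top u k
  rcases eq_or_ne (cs d u k) 0 with hT0 | hT0
  · have hall : ∀ i ∈ Finset.range k, f d (u i) (u (i+1)) = 0 :=
      Finset.sum_eq_zero_iff.mp hT0
    exact chain_mem_all h u k
      (fun i hi m => mem_of_f_eq_zero h (hall i (Finset.mem_range.mpr hi)) m) n
  · classical
    set T := cs d u k with hTdef
    set P : ℕ → Prop := fun j => cs d u j ≤ T / 2 with hP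
    have hP0 : P 0 := by simp [hP, cs]
    set j := Nat.findGreatest P k with hj
    have hPj : P j := Nat.findGreatest_spec (Nat.zero_le k) hP0
    have hjk : j ≤ k := Nat.findGreatest_le k
    have hjlt : j < k := by
      rcases lt_or_eq_of_le hjk with hlt | heq
      · exact hlt
      · exfalso
        rw [heq] at hPj
        exact absurd (hPj.trans_lt (ENNReal.half_lt_self hT0 hT_ne_top)) (lt_irrefl T)
    have hhalf_lt : T / 2 < (2⁻¹ : ℝ≥0∞) ^ (n+1+1) := by
      rw [pow_succ, div_eq_mul_inv]
      exact ENNReal.mul_lt_mul_left (by norm_num) (by norm_num) hT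
    have hmemA : (u 0, u j) ∈ V d (n+1) :=
      IH j hjlt u (n+1) (lt_of_le_of_lt hPj hhalf_lt)
    have hfj : f d (u j) (u (j+1)) ≤ T := by
      rw [hTdef, cs]
      exact Finset.single_le_sum (f := fun i => f d (u i) (u (i+1)))
        (fun _ _ => zero_le) (Finset.mem_range.mpr hjlt)
    have hmemB : (u j, u (j+1)) ∈ V d (n+1) := f_lt_imp h (lt_of_le_of_lt hfj hT)
    have hnP : ¬ P (j+1) := Nat.findGreatest_is_greatest (by rw [← hj]; omega) (by omega)
    have hCgt : T / 2 < cs d u (j+1) := not_le.mp hnP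
    set B := ∑ i ∈ Finset.Ico (j+1) k, f d (u i) (u (i+1)) with hB
    have hsplit : cs d u (j+1) + B = T :=
      Finset.sum_range_add_sum_Ico _ (by omega)
    have hBlt : B < T / 2 := by
      by_contra hge
      push_neg at hge
      have hTT : T < T := by
        calc T = T/2 + T/2 := (ENNReal.add_halves T).symm
          _ < B + cs d u (j+1) :=
              ENNReal.add_lt_add_of_le_of_lt
                (ne_top_of_le_ne_top hT_ne_top ENNReal.half_le_self) hge hCgt
          _ = T := by rw [add_comm]; exact hsplit
      exact lt_irrefl T hTT
    have hcsv : cs d (fun i => u (j+1+i)) (k-(j+1)) = B := by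
      rw [cs, hB, Finset.sum_Ico_eq_sum_range]
      exact Finset.sum_congr rfl fun i _ => by congr 1 <;> omega
    have hmemC : (u (j+1), u k) ∈ V d (n+1) := by
      have hres := IH (k-(j+1)) (by omega) (fun i => u (j+1+i)) (n+1)
        (by rw [hcsv]; exact hBlt.trans hhalf_lt)
      have hend : j+1+(k-(j+1)) = k := by omega
      simpa [hend] using hres
    exact comp3 h hmemA hmemB hmemC

variable (d)

open Classical in
/-- The chain quasi-pseudo-metric. -/
def rho (x y : X) : ℝ≥0∞ :=
  ⨅ (k : ℕ) (u : ℕ → X) (_ : u 0 = x) (_ : u k = y), cs d u k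

variable {d}

lemma rho_le_f (x y : X) : rho d x y ≤ f d x y := by
  refine iInf_le_of_le 1 (iInf_le_of_le (fun i => if i = 0 then x else y) ?_)
  refine iInf_le_of_le (by simp) (iInf_le_of_le (by simp) ?_)
  simp [cs]

lemma rho_ne_top (x y : X) : rho d x y ≠ ⊤ :=
  ne_top_of_le_ne_top (f_ne_top x y) (rho_le_f x y)

lemma rho_self (h : WeakerDr d) (x : X) : rho d x x = 0 :=
  le_antisymm ((rho_le_f x x).trans_eq (f_self h x)) zero_le

lemma rho_lt_imp (h : WeakerDr d) {n : ℕ} {x y : X}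
    (hr : rho d x y < (2⁻¹ : ℝ≥0∞) ^ (n+1)) : (x, y) ∈ V d n := by
  rw [rho, iInf_lt_iff] at hr
  obtain ⟨k, hr⟩ := hr
  rw [iInf_lt_iff] at hr
  obtain ⟨u, hr⟩ := hr
  rw [iInf_lt_iff] at hr
  obtain ⟨h0, hr⟩ := hr
  rw [iInf_lt_iff] at hr
  obtain ⟨hk, hr⟩ := hr
  have := key h k u n hr
  rwa [h0, hk] at this

lemma rho_le_chain (x y : X) (k : ℕ) (u : ℕ → X) (h0 : u 0 = x) (hk : u k = y) :
    rho d x y ≤ cs d u k :=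
  iInf_le_of_le k (iInf_le_of_le u (iInf_le_of_le h0 (iInf_le_of_le hk le_rfl)))

lemma rho_triangle (x y z : X) : rho d x z ≤ rho d x y + rho d y z := by
  refine ENNReal.le_of_forall_pos_le_add fun ε hε _ => ?_
  have hε2 : ((ε/2 : ℝ≥0) : ℝ≥0∞) ≠ 0 := by
    simp only [ne_eq, ENNReal.coe_eq_zero]
    exact (half_pos hε).ne'
  have h1 : rho d x y < rho d x y + (ε/2 : ℝ≥0) :=
    ENNReal.lt_add_right (rho_ne_top x y) hε2
  have h2 : rho d y z < rho d y z + (ε/2 : ℝ≥0) :=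
    ENNReal.lt_add_right (rho_ne_top y z) hε2
  rw [rho, iInf_lt_iff] at h1 h2
  obtain ⟨k, h1⟩ := h1
  rw [iInf_lt_iff] at h1
  obtain ⟨u, h1⟩ := h1
  rw [iInf_lt_iff] at h1
  obtain ⟨hu0, h1⟩ := h1
  rw [iInf_lt_iff] at h1
  obtain ⟨huk, h1⟩ := h1
  obtain ⟨m, h2⟩ := h2
  rw [iInf_lt_iff] at h2
  obtain ⟨v, h2⟩ := h2
  rw [iInf_lt_iff] at h2
  obtain ⟨hv0, h2⟩ := h2
  rw [iInf_lt_iff] at h2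
  obtain ⟨hvm, h2⟩ := h2
  classical
  set w : ℕ → X := fun i => if i ≤ k then u i else v (i - k) with hw
  have hw0 : w 0 = x := by simp [hw, hu0]
  have hwkm : w (k + m) = z := by
    rcases Nat.eq_zero_or_pos m with rfl | hm
    · simp only [hw, Nat.add_zero, le_refl, if_pos]
      rw [huk, ← hv0, hvm]
    · simp only [hw]
      rw [if_neg (by omega)]
      simpa using hvm
  have hcsw : cs d w (k + m) = cs d u k + cs d v m := by
    rw [cs, Finset.sum_range_add]
    congr 1
    · refine Finset.sum_congr rfl fun i hi => ?_
      rw [Finset.mem_range] at hi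
      simp only [hw]
      rw [if_pos (by omega), if_pos (by omega)]
    · refine Finset.sum_congr rfl fun i hi => ?_
      rw [Finset.mem_range] at hi
      have hwa : w (k + i) = v i := by
        rcases Nat.eq_zero_or_pos i with rfl | hi0
        · simp only [hw, Nat.add_zero, le_refl, if_pos]
          rw [huk, ← hv0]
        · simp only [hw]
          rw [if_neg (by omega)]
          congr 1
          omega
      have hwb : w (k + i + 1) = v (i + 1) := by
        simp only [hw]
        rw [if_neg (by omega)]
        congr 1
        omega
      rw [hwa, hwb]
  calc rho d x z ≤ cs d w (k + m) := rho_le_chain x z _ w hw0 hwkm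
    _ = cs d u k + cs d v m := hcsw
    _ ≤ (rho d x y + (ε/2 : ℝ≥0)) + (rho d y z + (ε/2 : ℝ≥0)) :=
        add_le_add h1.le h2.le
    _ = rho d x y + rho d y z + ((ε/2 : ℝ≥0) + (ε/2 : ℝ≥0) : ℝ≥0∞) := by ring
    _ = rho d x y + rho d y z + (ε : ℝ≥0) := by
        rw [← ENNReal.coe_add, add_halves]

end

end Stmt13Aux

theorem stmt_13 {X : Type*} (d : ℝ → X → X → ℝ≥0∞) (h : WeakerDr d) :
    ∃ ρ : X → X → ℝ,
      (∀ x y : X, 0 ≤ ρ x y) ∧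
      (∀ x : X, ρ x x = 0) ∧
      (∀ x y z : X, ρ x z ≤ ρ x y + ρ y z) ∧
      (∀ r ε : ℝ, 0 < r → 0 < ε → ∃ ε' : ℝ, 0 < ε' ∧
        ∀ x y : X, ρ x y < ε' → d r x y < ENNReal.ofReal ε) ∧
      (∀ ε : ℝ, 0 < ε → ∃ r ε' : ℝ, 0 < r ∧ 0 < ε' ∧
        ∀ x y : X, d r x y < ENNReal.ofReal ε' → ρ x y < ε) := by

  classical
  open Stmt13Aux in
  refine ⟨fun x y => (rho d x y).toReal, fun x y => ENNReal.toReal_nonneg,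
    fun x => by show (rho d x x).toReal = 0; rw [rho_self h]; simp, ?_, ?_, ?_⟩
  · intro x y z
    rw [← ENNReal.toReal_add (rho_ne_top x y) (rho_ne_top y z)]
    exact ENNReal.toReal_mono
      (ENNReal.add_ne_top.mpr ⟨rho_ne_top x y, rho_ne_top y z⟩) (rho_triangle x y z)
  · intro r ε hr hε
    obtain ⟨n₁, hn₁⟩ := exists_nat_ge r
    obtain ⟨n₂, hn₂⟩ : ∃ n : ℕ, eps n < ε := by
      obtain ⟨n, hn⟩ := exists_pow_lt_of_lt_one (show (0:ℝ) < 5*ε by linarith)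
        (by norm_num : (1/3:ℝ) < 1)
      exact ⟨n, by unfold eps; linarith⟩
    set n := max n₁ n₂ with hn
    refine ⟨((2⁻¹ : ℝ≥0∞) ^ (n+2)).toReal, ?_, ?_⟩
    · exact ENNReal.toReal_pos (pow_ne_zero _ (by norm_num)) (ENNReal.pow_ne_top (by norm_num))
    · intro x y hxy
      have hrho : rho d x y < (2⁻¹ : ℝ≥0∞) ^ (n+1+1) :=
        (ENNReal.toReal_lt_toReal (rho_ne_top x y)
          (ENNReal.pow_ne_top (by norm_num))).mp hxy
      have hmem : (x, y) ∈ V d n := V_anti h (Nat.le_succ n) (rho_lt_imp h hrho)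
      rw [mem_V] at hmem
      calc d r x y ≤ d ((n : ℝ) + 1) x y := by
            refine h.mono x y _ _ hr ?_
            have : (n₁ : ℝ) ≤ (n : ℝ) := by exact_mod_cast le_max_left n₁ n₂
            linarith
        _ < ENNReal.ofReal (eps n) := hmem
        _ ≤ ENNReal.ofReal ε :=
            ENNReal.ofReal_le_ofReal ((eps_anti (le_max_right n₁ n₂)).trans hn₂.le)
  · intro ε hε
    obtain ⟨n, hn⟩ := exists_pow_lt_of_lt_one hε (by norm_num : (1/2:ℝ) < 1)
    refine ⟨(n : ℝ) + 1, eps n, by positivity, eps_pos n, ?_⟩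
    intro x y hd
    have hmem : (x, y) ∈ V d n := hd
    have hrho : rho d x y ≤ (2⁻¹ : ℝ≥0∞) ^ n :=
      (rho_le_f x y).trans (f_le_of_mem hmem)
    calc (rho d x y).toReal ≤ ((2⁻¹ : ℝ≥0∞) ^ n).toReal :=
          ENNReal.toReal_mono (ENNReal.pow_ne_top (by norm_num)) hrho
      _ = (1/2 : ℝ) ^ n := by
          rw [ENNReal.toReal_pow]
          norm_num
      _ < ε := hn
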